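/- Let β > 1 and γ ∈ (0, β/2]. For every δ ∈ (0, (2π)^{1−β}(β−1)) there exists a constant C > 0 such that for every nonnegative function u ∈ L^β([−π,π]) whose integral I := ∫_{−π}^{π} u(x) dx satisfies I ≥ C, one has ∫_{−π}^{π} [ (β−1) u(x)^β / I^{β} − ((β−1)β/2) u(x)^{2γ} / I^{β+1} ] dx ≥ δ. -/

import Mathlib

open Real MeasureTheory

/-- Pointwise bound: for `0 ≤ a` and `0 < e ≤ β`, `a ^ e ≤ 1 + a ^ β`. -/
lemma rpow_le_one_add_rpow {a e β : ℝ} (ha : 0 ≤ a) (he : 0 < e) (heβ : e ≤ β) :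
    a ^ e ≤ 1 + a ^ β := by
  rcases le_or_gt a 1 with h | h
  · have h1 : a ^ e ≤ 1 := Real.rpow_le_one ha h he.le
    have h2 : 0 ≤ a ^ β := Real.rpow_nonneg ha β
    linarith
  · have h1 : a ^ e ≤ a ^ β := Real.rpow_le_rpow_of_exponent_le h.le heβ
    linarith

lemma div_split_aux {a JI : ℝ} (A b B J I : ℝ) (hJ : J ≠ 0) (hI : I ≠ 0)
    (hJI : JI = J * I) :
    (a * A * I - b * B) / JI = a / J * A - b / JI * B := by
  subst hJI
  field_simp

/-- The key drift estimate of Section 4: for `β > 1`, `γ ∈ (0, β/2]` and any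
`δ ∈ (0, (2π)^{1-β}(β-1))`, there exists `C > 0` such that every nonnegative
`u ∈ L^β([-π,π])` with `I := ∫_{-π}^{π} u ≥ C` satisfies
`∫_{-π}^{π} [(β-1) u^β / I^β - ((β-1)β/2) u^{2γ} / I^{β+1}] ≥ δ`. -/
theorem drift_estimate_holder_case (β γ δ : ℝ) (hβ : 1 < β)
    (hγ : γ ∈ Set.Ioc (0 : ℝ) (β / 2))
    (hδ : δ ∈ Set.Ioo (0 : ℝ) ((2 * π) ^ (1 - β) * (β - 1))) :
    ∃ C : ℝ, 0 < C ∧ ∀ u : ℝ → ℝ,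
      Measurable u →
      (∀ x, 0 ≤ u x) →
      IntegrableOn (fun x => u x ^ β) (Set.Icc (-π) π) →
      C ≤ ∫ x in Set.Icc (-π) π, u x →
      δ ≤ ∫ x in Set.Icc (-π) π,
        ((β - 1) * u x ^ β / (∫ z in Set.Icc (-π) π, u z) ^ β -
          ((β - 1) * β / 2) * u x ^ (2 * γ) / (∫ z in Set.Icc (-π) π, u z) ^ (β + 1)) := by
  have hπ : (0 : ℝ) < 2 * π := by positivity
  set k : ℝ := (2 * π) ^ (1 - β) with hk_def
  have hk : 0 < k := Real.rpow_pos_of_pos hπ _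
  set b : ℝ := (β - 1) * β / 2 with hb_def
  have hb : 0 < b := by
    have : 0 < β - 1 := by linarith
    positivity
  have hδ0 : 0 < δ := hδ.1
  have hδk : δ < k * (β - 1) := hδ.2
  have hden : 0 < k * (β - 1) - δ := by linarith
  refine ⟨max (max 1 (b / (β - 1) + 1)) ((k * b + 2 * π * b) / (k * (β - 1) - δ) + 1),
    lt_of_lt_of_le one_pos (le_max_of_le_left (le_max_left _ _)), ?_⟩
  intro u hm hpos hint hIC
  set S : Set ℝ := Set.Icc (-π) π with hS_def
  set I : ℝ := ∫ x in S, u x with hI_def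
  have hI1 : 1 ≤ I := le_trans (le_max_of_le_left (le_max_left _ _)) hIC
  have hI0 : 0 < I := lt_of_lt_of_le one_pos hI1
  have hIb : b / (β - 1) + 1 ≤ I := le_trans (le_max_of_le_left (le_max_right _ _)) hIC
  have hI3 : (k * b + 2 * π * b) / (k * (β - 1) - δ) + 1 ≤ I :=
    le_trans (le_max_of_le_right le_rfl) hIC
  haveI : IsFiniteMeasure (volume.restrict S) :=
    ⟨by rw [Measure.restrict_apply_univ]; exact measure_Icc_lt_top⟩
  -- integrability of constants and of u, u^{2γ}
  have hconst : IntegrableOn (fun _ : ℝ => (1 : ℝ)) S := integrableOn_const measure_Icc_lt_top.ne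
  have h_one_add : IntegrableOn (fun x => 1 + u x ^ β) S := hconst.add hint
  have hu_int : IntegrableOn u S := by
    refine Integrable.mono' h_one_add hm.aestronglyMeasurable.restrict ?_
    refine Filter.Eventually.of_forall fun x => ?_
    rw [Real.norm_of_nonneg (hpos x)]
    have := rpow_le_one_add_rpow (hpos x) one_pos hβ.le
    simpa [Real.rpow_one] using this
  have h2γpos : 0 < 2 * γ := by have := hγ.1; linarith
  have h2γle : 2 * γ ≤ β := by have := hγ.2; linarith
  have hu2γ_int : IntegrableOn (fun x => u x ^ (2 * γ)) S := by
    refine Integrable.mono' h_one_add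
      ((hm.pow_const (2 * γ)).aestronglyMeasurable.restrict) ?_
    refine Filter.Eventually.of_forall fun x => ?_
    rw [Real.norm_of_nonneg (Real.rpow_nonneg (hpos x) _)]
    exact rpow_le_one_add_rpow (hpos x) h2γpos h2γle
  set A : ℝ := ∫ x in S, u x ^ β with hA_def
  set B : ℝ := ∫ x in S, u x ^ (2 * γ) with hB_def
  have hA0 : 0 ≤ A := integral_nonneg fun x => Real.rpow_nonneg (hpos x) _
  have hB0 : 0 ≤ B := integral_nonneg fun x => Real.rpow_nonneg (hpos x) _
  have h2pi : (∫ _x in S, (1 : ℝ)) = 2 * π := by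
    rw [setIntegral_const, smul_eq_mul, mul_one, hS_def, Real.volume_real_Icc_of_le (by linarith [Real.pi_pos])]
    ring
  -- Hölder: I ≤ A^{1/β} * (2π)^{(β-1)/β}
  have hβ0 : (0 : ℝ) < β := by linarith
  have hpq : β.HolderConjugate (β / (β - 1)) := by
    exact (Real.holderConjugate_iff_eq_conjExponent hβ).2 rfl
  have hmemβ : MemLp u (ENNReal.ofReal β) (volume.restrict S) := by
    have hbne : ENNReal.ofReal β ≠ 0 := by
      simp [ENNReal.ofReal_eq_zero, not_le, hβ0]
    have hbtop : ENNReal.ofReal β ≠ ⊤ := ENNReal.ofReal_ne_top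
    refine (memLp_norm_rpow_iff hm.aestronglyMeasurable.restrict hbne hbtop).1 ?_
    rw [ENNReal.div_self hbne hbtop, ENNReal.toReal_ofReal hβ0.le,
      memLp_one_iff_integrable]
    have : (fun x => ‖u x‖ ^ β) = fun x => u x ^ β := funext fun x => by
      rw [Real.norm_of_nonneg (hpos x)]
    rw [this]
    exact hint
  have hmemq : MemLp (fun _ : ℝ => (1 : ℝ)) (ENNReal.ofReal (β / (β - 1)))
      (volume.restrict S) := memLp_const 1
  have holder := integral_mul_le_Lp_mul_Lq_of_nonneg hpq
    (Filter.Eventually.of_forall fun x => hpos x)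
    (Filter.Eventually.of_forall fun _ => zero_le_one) hmemβ hmemq
  have hH : I ≤ A ^ (1 / β) * (2 * π) ^ ((β - 1) / β) := by
    have e1 : (∫ x in S, u x * 1) = I := by simp [hI_def]
    have e2 : (∫ _x in S, (1 : ℝ) ^ (β / (β - 1))) = 2 * π := by
      simpa [Real.one_rpow] using h2pi
    rw [e1, e2] at holder
    have e3 : 1 / (β / (β - 1)) = (β - 1) / β := by
      rw [one_div_div]
    rwa [e3] at holder
  have hA_lb : k * I ^ β ≤ A := by
    have h1 : I ^ β ≤ (A ^ (1 / β) * (2 * π) ^ ((β - 1) / β)) ^ β :=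
      Real.rpow_le_rpow hI0.le hH hβ0.le
    have h2 : (A ^ (1 / β) * (2 * π) ^ ((β - 1) / β)) ^ β = A * (2 * π) ^ (β - 1) := by
      rw [Real.mul_rpow (Real.rpow_nonneg hA0 _) (Real.rpow_nonneg hπ.le _)]
      rw [← Real.rpow_mul hA0, ← Real.rpow_mul hπ.le]
      rw [one_div_mul_cancel hβ0.ne', Real.rpow_one, div_mul_cancel₀ _ hβ0.ne']
    rw [h2] at h1
    have h3 : k * I ^ β ≤ k * (A * (2 * π) ^ (β - 1)) :=
      mul_le_mul_of_nonneg_left h1 hk.le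
    have h4 : k * (2 * π) ^ (β - 1) = 1 := by
      rw [hk_def, ← Real.rpow_add hπ]
      norm_num
    calc k * I ^ β ≤ k * (A * (2 * π) ^ (β - 1)) := h3
      _ = A * (k * (2 * π) ^ (β - 1)) := by ring
      _ = A := by rw [h4, mul_one]
  -- bound on B
  have hB_ub : B ≤ 2 * π + A := by
    have h1 : B ≤ ∫ x in S, (1 + u x ^ β) :=
      integral_mono hu2γ_int h_one_add fun x =>
        rpow_le_one_add_rpow (hpos x) h2γpos h2γle
    have h2 : (∫ x in S, (1 + u x ^ β)) = 2 * π + A := by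
      rw [integral_add hconst hint, h2pi]
    linarith
  -- split the integral
  set Ipβ : ℝ := I ^ β with hIpβ_def
  set Ip1 : ℝ := I ^ (β + 1) with hIp1_def
  have hIpβ0 : 0 < Ipβ := Real.rpow_pos_of_pos hI0 _
  have hIp10 : 0 < Ip1 := Real.rpow_pos_of_pos hI0 _
  have hIpβ1 : 1 ≤ Ipβ := Real.one_le_rpow hI1 hβ0.le
  have hIp1I : Ip1 = Ipβ * I := by
    rw [hIp1_def, hIpβ_def, Real.rpow_add hI0, Real.rpow_one]
  have hIp1_ge : I ≤ Ip1 := by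
    rw [hIp1_def]
    calc I = I ^ (1 : ℝ) := (Real.rpow_one I).symm
      _ ≤ I ^ (β + 1) := Real.rpow_le_rpow_of_exponent_le hI1 (by linarith)
  have hsplit : (∫ x in S,
        ((β - 1) * u x ^ β / I ^ β - (β - 1) * β / 2 * u x ^ (2 * γ) / I ^ (β + 1)))
      = (β - 1) / Ipβ * A - b / Ip1 * B := by
    have e : (fun x => (β - 1) * u x ^ β / I ^ β - (β - 1) * β / 2 * u x ^ (2 * γ) / I ^ (β + 1))
        = fun x => (β - 1) / Ipβ * u x ^ β - b / Ip1 * u x ^ (2 * γ) := by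
      funext x
      rw [hb_def, hIpβ_def, hIp1_def]
      ring
    rw [e, integral_sub (hint.const_mul _) (hu2γ_int.const_mul _),
      integral_const_mul, integral_const_mul]
  rw [hsplit]
  clear_value A B Ipβ Ip1 I
  -- final arithmetic
  have h5 : b ≤ (β - 1) * I := by
    have h : b / (β - 1) ≤ I := by linarith
    calc b = b / (β - 1) * (β - 1) := (div_mul_cancel₀ b (by linarith : (β:ℝ) - 1 ≠ 0)).symm
      _ ≤ I * (β - 1) := by
          apply mul_le_mul_of_nonneg_right h (by linarith)
      _ = (β - 1) * I := by ring
  have h6 : k * b + 2 * π * b ≤ (k * (β - 1) - δ) * I := by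
    have h : (k * b + 2 * π * b) / (k * (β - 1) - δ) ≤ I := by linarith
    calc k * b + 2 * π * b
        = (k * b + 2 * π * b) / (k * (β - 1) - δ) * (k * (β - 1) - δ) :=
          (div_mul_cancel₀ _ hden.ne').symm
      _ ≤ I * (k * (β - 1) - δ) := mul_le_mul_of_nonneg_right h hden.le
      _ = (k * (β - 1) - δ) * I := by ring
  have hgoal' : δ * Ip1 ≤ (β - 1) * A * I - b * B := by
    nlinarith [mul_nonneg (sub_nonneg.2 hA_lb) (sub_nonneg.2 h5),
      mul_le_mul_of_nonneg_left h6 hIpβ0.le,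
      mul_nonneg (sub_nonneg.2 hIpβ1) (mul_pos hπ hb).le,
      mul_le_mul_of_nonneg_left hB_ub hb.le,
      mul_le_mul_of_nonneg_right hA_lb (mul_nonneg (by linarith : (0:ℝ) ≤ β - 1) hI0.le)]
  have : δ ≤ ((β - 1) * A * I - b * B) / Ip1 := (le_div_iff₀ hIp10).2 hgoal'
  calc δ ≤ ((β - 1) * A * I - b * B) / Ip1 := this
    _ = (β - 1) / Ipβ * A - b / Ip1 * B :=
        div_split_aux A b B Ipβ I hIpβ0.ne' hI0.ne' hIp1I
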